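/- Let p be a prime, let a be a primitive root modulo p, let ξ be a p-th root of unity with ξ ≠ 1, and let η be a (p−1)-th root of unity. Then Q(η, ξ) = Σ_{i=0}^{p−2} η^i · ξ^{a^i mod p} is nonzero. -/

import Mathlib

noncomputable def cycHom {G : Type*} [Group G] (n : ℕ) (g : G) (hg : g ^ n = 1) :
    Multiplicative (ZMod n) →* G :=
  AddMonoidHom.toMultiplicativeLeft
    (ZMod.lift n ⟨zmultiplesHom (Additive G) (Additive.ofMul g), by
      show ((n:ℤ) • Additive.ofMul g) = 0
      rw [← ofMul_zpow, zpow_natCast, hg]; rfl⟩)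

lemma cycHom_int {G : Type*} [Group G] (n : ℕ) (g : G) (hg : g ^ n = 1) (k : ℤ) :
    cycHom n g hg (Multiplicative.ofAdd ((k : ZMod n))) = g ^ k := by
  show Additive.toMul ((ZMod.lift n _) ((k : ZMod n))) = g ^ k
  simp [ZMod.lift_coe, ← ofMul_zpow]

lemma cycHom_nat {G : Type*} [Group G] (n : ℕ) (g : G) (hg : g ^ n = 1) (k : ℕ) :
    cycHom n g hg (Multiplicative.ofAdd ((k : ZMod n))) = g ^ k := by
  have := cycHom_int n g hg k
  simpa using this

theorem stmt7 (p a : ℕ) (hp : p.Prime) (ha : orderOf (a : ZMod p) = p - 1)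
    (ξ η : ℂ) (hξ : ξ ^ p = 1) (hξ1 : ξ ≠ 1) (hη : η ^ (p - 1) = 1) :
    ∑ i ∈ Finset.range (p - 1), η ^ i * ξ ^ (a ^ i % p) ≠ 0 := by
  haveI : Fact p.Prime := ⟨hp⟩
  have hp2 : 2 ≤ p := hp.two_le
  have hp1 : p - 1 ≠ 0 := by omega
  haveI : NeZero (p - 1) := ⟨hp1⟩
  -- a as a unit
  have hfin : IsOfFinOrder (a : ZMod p) := by
    rw [← orderOf_pos_iff, ha]; omega
  set ua : (ZMod p)ˣ := hfin.isUnit.unit with hua_def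
  have hua : (ua : ZMod p) = a := IsUnit.unit_spec _
  have horda : orderOf ua = p - 1 := by rw [← orderOf_units, hua, ha]
  have huapow : ua ^ (p - 1) = 1 := by rw [← horda]; exact pow_orderOf_eq_one ua
  -- η as a unit
  have hηu : IsUnit η := IsUnit.of_pow_eq_one hη hp1
  set ηu : ℂˣ := hηu.unit with hηu_def
  have hηuc : (ηu : ℂ) = η := IsUnit.unit_spec _
  have hηupow : ηu ^ (p - 1) = 1 := Units.ext (by push_cast [hηuc]; exact hη)
  -- the homomorphisms
  set ψg := cycHom (p - 1) ua huapow with hψg_def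
  set φ := cycHom (p - 1) ηu hηupow with hφ_def
  have hcard : Fintype.card (ZMod p)ˣ = p - 1 := by
    rw [ZMod.card_units_eq_totient, Nat.totient_prime hp]
  have htop : Subgroup.zpowers ua = ⊤ := by
    apply Subgroup.eq_top_of_card_eq
    rw [Nat.card_zpowers, horda, Nat.card_eq_fintype_card, hcard]
  have hsurj : Function.Surjective ψg := by
    intro u
    obtain ⟨k, hk⟩ := Subgroup.mem_zpowers_iff.mp (htop ▸ Subgroup.mem_top u)
    exact ⟨Multiplicative.ofAdd ((k : ZMod (p - 1))), by rw [hψg_def, cycHom_int]; exact hk⟩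
  have hbij : Function.Bijective ψg := by
    rw [Fintype.bijective_iff_surjective_and_card]
    refine ⟨hsurj, ?_⟩
    simp [hcard]
  set e := MulEquiv.ofBijective ψg hbij with he_def
  set f : (ZMod p)ˣ →* ℂˣ := φ.comp e.symm.toMonoidHom with hf_def
  set χ : MulChar (ZMod p) ℂ := MulChar.ofUnitHom f with hχ_def
  have hχpow : ∀ i : ℕ, χ ((a : ZMod p) ^ i) = η ^ i := by
    intro i
    have h1 : (a : ZMod p) ^ i = ((ua ^ i : (ZMod p)ˣ) : ZMod p) := by
      rw [Units.val_pow_eq_pow_val, hua]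
    rw [h1, hχ_def, MulChar.ofUnitHom_coe]
    have h2 : e.symm (ua ^ i) = Multiplicative.ofAdd ((i : ZMod (p - 1))) := by
      apply e.injective
      rw [MulEquiv.apply_symm_apply]
      exact (cycHom_nat (p - 1) ua huapow i).symm
    rw [hf_def]
    show ((φ (e.symm (ua ^ i)) : ℂˣ) : ℂ) = η ^ i
    rw [h2, hφ_def, cycHom_nat]
    push_cast [hηuc]
    rfl
  -- the additive character
  set ψ : AddChar (ZMod p) ℂ := AddChar.zmodChar p hξ with hψ_def
  have hψ1 : ψ ≠ 1 := by
    rw [AddChar.ne_one_iff]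
    refine ⟨1, ?_⟩
    rw [hψ_def, AddChar.zmodChar_apply, ZMod.val_one p]
    simpa using hξ1
  have hψprim := AddChar.IsPrimitive.of_ne_one hψ1
  have hψa : ∀ i : ℕ, ψ ((a : ZMod p) ^ i) = ξ ^ (a ^ i % p) := by
    intro i
    have h1 : ((a : ZMod p)) ^ i = ((a ^ i : ℕ) : ZMod p) := by push_cast; ring
    rw [h1, hψ_def, AddChar.zmodChar_apply', pow_eq_pow_mod _ hξ]
  -- reindexing lemma
  have key : ∀ F : ZMod p → ℂ,
      ∑ i ∈ Finset.range (p - 1), F ((a : ZMod p) ^ i)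
        = ∑ x ∈ Finset.univ \ {(0 : ZMod p)}, F x := by
    intro F
    refine Finset.sum_bij (fun i _ => (a : ZMod p) ^ i) ?_ ?_ ?_ ?_
    · intro i hi
      simp only [Finset.mem_sdiff, Finset.mem_univ, Finset.mem_singleton, true_and]
      have : (a : ZMod p) ^ i = ((ua ^ i : (ZMod p)ˣ) : ZMod p) := by
        rw [Units.val_pow_eq_pow_val, hua]
      rw [this]
      exact Units.ne_zero _
    · intro i hi j hj hij
      simp only [Finset.mem_range] at hi hj
      have h1 : ∀ k : ℕ, (a : ZMod p) ^ k = ((ua ^ k : (ZMod p)ˣ) : ZMod p) := fun k => by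
        rw [Units.val_pow_eq_pow_val, hua]
      have hij' : (a : ZMod p) ^ i = (a : ZMod p) ^ j := hij
      rw [h1, h1] at hij'
      have h2 : ua ^ i = ua ^ j := Units.ext hij'
      exact pow_injOn_Iio_orderOf (by rwa [Set.mem_Iio, horda]) (by rwa [Set.mem_Iio, horda]) h2
    · intro x hx
      simp only [Finset.mem_sdiff, Finset.mem_univ, Finset.mem_singleton, true_and] at hx
      have hxu : IsUnit x := Ne.isUnit hx
      obtain ⟨z, hz⟩ := hsurj hxu.unit
      refine ⟨(Multiplicative.toAdd z).val, Finset.mem_range.2 (ZMod.val_lt _), ?_⟩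
      have hz2 : ψg (Multiplicative.ofAdd (((Multiplicative.toAdd z).val : ℕ) : ZMod (p - 1)))
          = hxu.unit := by
        rw [show ((((Multiplicative.toAdd z).val : ℕ) : ZMod (p - 1)))
            = Multiplicative.toAdd z by simp [ZMod.natCast_val, ZMod.cast_id], ← hz]
        rfl
      rw [hψg_def, cycHom_nat] at hz2
      show (a : ZMod p) ^ (Multiplicative.toAdd z).val = x
      have : (a : ZMod p) ^ (Multiplicative.toAdd z).val
          = ((ua ^ (Multiplicative.toAdd z).val : (ZMod p)ˣ) : ZMod p) := by
        rw [Units.val_pow_eq_pow_val, hua]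
      rw [this, hz2, IsUnit.unit_spec]
    · intros; rfl
  by_cases hη1 : η = 1
  · -- trivial character case: the sum is -1
    have : ∑ i ∈ Finset.range (p - 1), η ^ i * ξ ^ (a ^ i % p)
        = ∑ x ∈ Finset.univ \ {(0 : ZMod p)}, ψ x := by
      rw [← key (fun x => ψ x)]
      refine Finset.sum_congr rfl fun i _ => ?_
      rw [hη1, one_pow, one_mul, hψa]
    rw [this]
    have hsum0 : ∑ x : ZMod p, ψ x = 0 := AddChar.sum_eq_zero_of_ne_one hψ1
    have : ∑ x ∈ Finset.univ \ {(0 : ZMod p)}, ψ x = -1 := by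
      have := Finset.sum_eq_sum_sdiff_singleton_add (Finset.mem_univ (0 : ZMod p)) (fun x => ψ x)
      rw [hsum0, AddChar.map_zero_eq_one] at this
      linear_combination -this
    rw [this]
    norm_num
  · -- nontrivial character case: Gauss sum is nonzero
    have hχ1 : χ ≠ 1 := by
      intro h
      apply hη1
      have := hχpow 1
      rw [pow_one, pow_one, h] at this
      rw [← this, ← hua, MulChar.one_apply_coe]
    have hS : ∑ i ∈ Finset.range (p - 1), η ^ i * ξ ^ (a ^ i % p) = gaussSum χ ψ := by
      have h1 : ∑ i ∈ Finset.range (p - 1), η ^ i * ξ ^ (a ^ i % p)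
          = ∑ x ∈ Finset.univ \ {(0 : ZMod p)}, χ x * ψ x := by
        rw [← key (fun x => χ x * ψ x)]
        refine Finset.sum_congr rfl fun i _ => ?_
        rw [hχpow, hψa]
      rw [h1]
      unfold gaussSum
      have := Finset.sum_eq_sum_sdiff_singleton_add (Finset.mem_univ (0 : ZMod p))
        (fun x => χ x * ψ x)
      rw [this, MulChar.map_zero, zero_mul, add_zero]
    rw [hS]
    apply gaussSum_ne_zero_of_nontrivial _ hχ1 hψprim
    rw [ZMod.card]
    exact Nat.cast_ne_zero.mpr hp.ne_zero
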